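/- There exist absolute constants C > 0 and ε₀, δ₀ > 0 such that the following holds. Let A be an M × N complex matrix and let 𝒜 be an (ε,δ)-differentially private algorithm with ε ≤ ε₀ and δ ≤ δ₀. Then there exists a vector x ∈ {0,1}^N such that for every L × M orthogonal projection matrix P and every K × K submatrix B of PA, E[‖𝒜(x) − Ax‖₂²] ≥ C · K · |det(B)|^{2/K} / (log₂ N)². -/

import Mathlib

open MeasureTheory Finset
open scoped ENNReal NNReal

noncomputable section

/-- `(ε,δ)`-differential privacy for a randomized algorithm mapping inputs in `[0,1]^N`
(ℓ₁-neighboring inputs differ by at most 1 in ℓ₁ norm) to probability measures on `Ω`. -/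
def DiffPrivate {N : ℕ} {Ω : Type*} [MeasurableSpace Ω]
    (A : (Fin N → ℝ) → Measure Ω) (ε δ : ℝ) : Prop :=
  ∀ x x' : Fin N → ℝ,
    (∀ i, x i ∈ Set.Icc (0 : ℝ) 1) → (∀ i, x' i ∈ Set.Icc (0 : ℝ) 1) →
    (∑ i, |x i - x' i|) ≤ 1 →
    ∀ T : Set Ω, MeasurableSet T →
      A x T ≤ ENNReal.ofReal (Real.exp ε) * A x' T + ENNReal.ofReal δ

section Prelim
open Matrix

lemma pow_le_exp_mul_factorial : ∀ K : ℕ, (K:ℝ)^K ≤ Real.exp K * (Nat.factorial K : ℝ)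
  | 0 => by simp
  | (K+1) => by
    have hK : ((K+1:ℕ):ℝ)^(K+1) ≤ Real.exp 1 * (K+1) * (K:ℝ)^K := by
      have h1 : ((K+1:ℕ):ℝ)^K ≤ Real.exp 1 * (K:ℝ)^K := by
        rcases Nat.eq_zero_or_pos K with h|h
        · subst h; simpa using Real.one_le_exp (by norm_num)
        · have hKpos : (0:ℝ) < K := by exact_mod_cast h
          have heq : ((K+1:ℕ):ℝ) = K * (1 + 1/K) := by rw [Nat.cast_succ]; field_simp
          rw [heq, mul_pow]
          have h2 : (1 + 1/(K:ℝ))^K ≤ Real.exp 1 := by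
            have h3 : (1 + 1/(K:ℝ))^K ≤ (Real.exp (1/K))^K := by
              apply pow_le_pow_left₀ (by positivity)
              have := Real.add_one_le_exp (1/(K:ℝ)); linarith
            rw [← Real.exp_nat_mul] at h3
            have h4 : (K:ℝ) * (1/K) = 1 := by field_simp
            rwa [h4] at h3
          nlinarith [pow_nonneg hKpos.le K, pow_nonneg (by positivity : (0:ℝ) ≤ 1 + 1/(K:ℝ)) K]
      have heq : ((K+1:ℕ):ℝ)^(K+1) = ((K+1:ℕ):ℝ) * ((K+1:ℕ):ℝ)^K := by ring
      rw [heq]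
      have hp : (0:ℝ) ≤ ((K+1:ℕ):ℝ) := by positivity
      calc ((K+1:ℕ):ℝ) * ((K+1:ℕ):ℝ)^K ≤ ((K+1:ℕ):ℝ) * (Real.exp 1 * (K:ℝ)^K) :=
            mul_le_mul_of_nonneg_left h1 hp
        _ = Real.exp 1 * (K+1) * (K:ℝ)^K := by push_cast; ring
    have ih := pow_le_exp_mul_factorial K
    calc ((K+1:ℕ):ℝ)^(K+1) ≤ Real.exp 1 * (K+1) * (K:ℝ)^K := hK
      _ ≤ Real.exp 1 * (K+1) * (Real.exp K * (Nat.factorial K : ℝ)) := by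
          apply mul_le_mul_of_nonneg_left ih; positivity
      _ = Real.exp (K+1) * ((K+1) * (Nat.factorial K : ℝ)) := by
          rw [Real.exp_add]; ring
      _ = Real.exp ((K+1:ℕ):ℝ) * (Nat.factorial (K+1) : ℝ) := by
          rw [Nat.factorial_succ]; push_cast; ring

lemma prod_fin_sub_eq_factorial (K : ℕ) : (∏ m : Fin K, ((K:ℝ) - (m:ℕ))) = Nat.factorial K := by
  rw [Fin.prod_univ_eq_prod_range (fun m => ((K:ℝ) - m))]
  have h1 : ∀ j ∈ Finset.range K, ((K:ℝ) - j) = (((K - j : ℕ)):ℝ) := by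
    intro j hj
    have := Finset.mem_range.mp hj
    push_cast [Nat.cast_sub this.le]; ring
  rw [Finset.prod_congr rfl h1, ← Nat.cast_prod]
  congr 1
  have h2 : ∀ i ∈ Finset.range K, K - i = (fun j => j + 1) (K - 1 - i) := by
    intro i hi; have := Finset.mem_range.mp hi; show K - i = (K-1-i)+1; omega
  rw [Finset.prod_congr rfl h2, Finset.prod_range_reflect (fun j => j+1) K]
  exact Finset.prod_range_add_one_eq_factorial K



lemma exists_good_level {K : ℕ} (hK : 1 ≤ K) (μ : Fin K → ℝ) (hpos : ∀ i, 0 < μ i)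
    {g2 : ℝ} (hg : 0 < g2) (hprod : ∏ i, μ i = g2 ^ K) :
    ∃ (θ : ℝ) (S : Finset (Fin K)), 0 < θ ∧ (∀ i ∈ S, θ ≤ μ i) ∧
      (K:ℝ)^2 * g2 ≤ Real.exp 2 * (θ * ((S.card : ℝ))^2) := by
  by_contra hcon
  push_neg at hcon
  set σ := Tuple.sort (fun i => μ i) with hσ
  have hmono : Monotone ((fun i => μ i) ∘ σ) := Tuple.monotone_sort _
  have key : ∀ m : Fin K, μ (σ m) * ((K:ℝ) - (m:ℕ))^2 < (K:ℝ)^2 * g2 / Real.exp 2 := by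
    intro m
    set S : Finset (Fin K) := (Finset.Ici m).image σ with hS
    have hcard : (S.card : ℝ) = (K:ℝ) - (m:ℕ) := by
      rw [hS, Finset.card_image_of_injective _ σ.injective, Fin.card_Ici]
      have := m.2.le
      push_cast [Nat.cast_sub this]; ring
    have hlev : ∀ i ∈ S, μ (σ m) ≤ μ i := by
      intro i hi
      rw [hS, Finset.mem_image] at hi
      obtain ⟨j, hj, rfl⟩ := hi
      exact hmono (Finset.mem_Ici.mp hj)
    have h := hcon (μ (σ m)) S (hpos (σ m)) hlev
    rw [hcard] at h
    rw [lt_div_iff₀ (Real.exp_pos 2)]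
    nlinarith [Real.exp_pos 2, hpos (σ m), sq_nonneg ((K:ℝ) - (m:ℕ))]
  have hprodσ : ∏ m : Fin K, μ (σ m) = g2 ^ K := by
    rw [Equiv.prod_comp σ (fun i => μ i)]; exact hprod
  have hKm : ∀ m : Fin K, (0:ℝ) < (K:ℝ) - (m:ℕ) := by
    intro m
    have : ((m:ℕ):ℝ) < K := by exact_mod_cast m.2
    linarith
  have hlt : ∏ m : Fin K, μ (σ m) < ∏ m : Fin K, ((K:ℝ)^2 * g2 / Real.exp 2) / ((K:ℝ) - (m:ℕ))^2 := by
    apply Finset.prod_lt_prod_of_nonempty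
    · intro m _; exact hpos (σ m)
    · intro m _
      rw [lt_div_iff₀ (by have := hKm m; positivity)]
      exact key m
    · have hpos' : 0 < K := hK
      have : Nonempty (Fin K) := ⟨⟨0, hpos'⟩⟩
      exact Finset.univ_nonempty
  rw [hprodσ] at hlt
  set F : ℝ := (Nat.factorial K : ℝ) with hF
  have hFpos : 0 < F := by rw [hF]; exact_mod_cast Nat.factorial_pos K
  have hsplit : ∏ m : Fin K, ((K:ℝ)^2 * g2 / Real.exp 2) / ((K:ℝ) - (m:ℕ))^2
      = ((K:ℝ)^2 * g2 / Real.exp 2)^K / F^2 := by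
    rw [Finset.prod_div_distrib, Finset.prod_const, Finset.card_univ, Fintype.card_fin,
      Finset.prod_pow, prod_fin_sub_eq_factorial]
  rw [hsplit] at hlt
  -- now derive contradiction
  set E : ℝ := Real.exp 1 with hE
  have hEpos : 0 < E := Real.exp_pos 1
  have hKF : (K:ℝ)^K ≤ E^K * F := by
    have := pow_le_exp_mul_factorial K
    rwa [show Real.exp (K:ℕ) = E^K by rw [hE, ← Real.exp_nat_mul]; norm_num] at this
  have he2 : Real.exp 2 = E^2 := by rw [hE, ← Real.exp_nat_mul]; norm_num
  have hexp : ((K:ℝ)^2 * g2 / Real.exp 2)^K = ((K:ℝ)^K)^2 * g2^K / (E^K)^2 := by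
    rw [he2, div_pow, mul_pow, ← pow_mul, ← pow_mul, ← pow_mul, ← pow_mul,
      Nat.mul_comm 2 K]
  rw [hexp] at hlt
  have hle : ((K:ℝ)^K)^2 * g2^K / (E^K)^2 / F^2 ≤ g2^K := by
    rw [div_le_iff₀ (by positivity), div_le_iff₀ (by positivity)]
    calc ((K:ℝ)^K)^2 * g2^K ≤ (E^K * F)^2 * g2^K := by
          have h2 : ((K:ℝ)^K)^2 ≤ (E^K*F)^2 := by
            apply pow_le_pow_left₀ (by positivity) hKF
          nlinarith [pow_pos hg K]
      _ = g2 ^ K * F ^ 2 * (E^K)^2 := by ring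
  exact absurd (lt_of_lt_of_le hlt hle) (lt_irrefl _)


lemma star_mul_self_complex (z : ℂ) : star z * z = ((‖z‖^2 : ℝ) : ℂ) := by
  rw [Complex.star_def, ← Complex.normSq_eq_conj_mul_self]
  norm_cast
  rw [Complex.sq_norm]

variable {K : ℕ}

lemma dot_self_eq_sum_sq (w : Fin K → ℂ) :
    star w ⬝ᵥ w = ((∑ i, ‖w i‖^2 : ℝ) : ℂ) := by
  simp only [dotProduct, Pi.star_apply, star_mul_self_complex]
  push_cast
  rfl

lemma dot_mulVec_helper (M : Matrix (Fin K) (Fin K) ℂ) (v w : Fin K → ℂ) :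
    star (M *ᵥ v) ⬝ᵥ (M *ᵥ w) = star v ⬝ᵥ ((star M * M) *ᵥ w) := by
  rw [star_mulVec, ← dotProduct_mulVec, mulVec_mulVec, star_eq_conjTranspose]

variable (B : Matrix (Fin K) (Fin K) ℂ)

section spectral
variable (hH : (Bᴴ * B).IsHermitian)

lemma sum_sq_mulVec_star_unitary (z : Fin K → ℂ) :
    ∑ i, ‖((star (hH.eigenvectorUnitary : Matrix (Fin K) (Fin K) ℂ)) *ᵥ z) i‖^2
      = ∑ i, ‖z i‖^2 := by
  set U : Matrix (Fin K) (Fin K) ℂ := (hH.eigenvectorUnitary : Matrix (Fin K) (Fin K) ℂ) with hU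
  have h1 : star ((star U) *ᵥ z) ⬝ᵥ ((star U) *ᵥ z) = star z ⬝ᵥ z := by
    rw [dot_mulVec_helper, star_star]
    have hu : U * star U = 1 := ((Unitary.mem_iff).mp hH.eigenvectorUnitary.2).2
    rw [hu, one_mulVec]
  rw [dot_self_eq_sum_sq, dot_self_eq_sum_sq] at h1
  exact_mod_cast h1

lemma sum_sq_mulVec_unitary (z : Fin K → ℂ) :
    ∑ i, ‖((hH.eigenvectorUnitary : Matrix (Fin K) (Fin K) ℂ) *ᵥ z) i‖^2 = ∑ i, ‖z i‖^2 := by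
  set U : Matrix (Fin K) (Fin K) ℂ := (hH.eigenvectorUnitary : Matrix (Fin K) (Fin K) ℂ) with hU
  have h1 : star (U *ᵥ z) ⬝ᵥ (U *ᵥ z) = star z ⬝ᵥ z := by
    rw [dot_mulVec_helper]
    have hu : star U * U = 1 := ((Unitary.mem_iff).mp hH.eigenvectorUnitary.2).1
    rw [hu, one_mulVec]
  rw [dot_self_eq_sum_sq, dot_self_eq_sum_sq] at h1
  exact_mod_cast h1

lemma quad_eq_sum_eig (z : Fin K → ℂ) :
    ∑ i, ‖(B *ᵥ z) i‖^2
      = ∑ i, hH.eigenvalues i * ‖((star (hH.eigenvectorUnitary : Matrix (Fin K) (Fin K) ℂ)) *ᵥ z) i‖^2 := by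
  have e1 : star z ⬝ᵥ ((Bᴴ * B) *ᵥ z) = ((∑ i, ‖(B *ᵥ z) i‖^2 : ℝ) : ℂ) := by
    rw [← mulVec_mulVec, dotProduct_mulVec, ← star_mulVec, dot_self_eq_sum_sq]
  have e2 : star z ⬝ᵥ ((Bᴴ * B) *ᵥ z)
      = ((∑ i, hH.eigenvalues i * ‖((star (hH.eigenvectorUnitary : Matrix (Fin K) (Fin K) ℂ)) *ᵥ z) i‖^2 : ℝ) : ℂ) := by
    conv_lhs => rw [hH.spectral_theorem]
    rw [Unitary.conjStarAlgAut_apply]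
    rw [← mulVec_mulVec, dotProduct_mulVec, ← vecMul_vecMul]
    have hsz : star ((star (hH.eigenvectorUnitary : Matrix (Fin K) (Fin K) ℂ)) *ᵥ z)
        = star z ᵥ* (hH.eigenvectorUnitary : Matrix (Fin K) (Fin K) ℂ) := by
      rw [star_mulVec, star_eq_conjTranspose, conjTranspose_conjTranspose]
    rw [← hsz]
    simp only [dotProduct, vecMul_diagonal]
    push_cast
    apply Finset.sum_congr rfl
    intro i _
    set cc : Fin K → ℂ := (star (hH.eigenvectorUnitary : Matrix (Fin K) (Fin K) ℂ)) *ᵥ z with hcc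
    have hterm : (star cc) i * cc i = ((‖cc i‖^2 : ℝ) : ℂ) := star_mul_self_complex (cc i)
    calc (star cc) i * (RCLike.ofReal ∘ hH.eigenvalues) i * cc i
        = ((hH.eigenvalues i : ℝ) : ℂ) * ((star cc) i * cc i) := by
          simp only [Function.comp_apply, RCLike.ofReal_alg, Complex.real_smul, mul_one]; ring
      _ = ((hH.eigenvalues i : ℝ):ℂ) * ((‖cc i‖^2 : ℝ) : ℂ) := by rw [hterm]
      _ = ((hH.eigenvalues i : ℝ):ℂ) * ((‖cc i‖:ℂ))^2 := by push_cast; ring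
  have h3 := e1.symm.trans e2
  exact_mod_cast h3

lemma prod_eigenvalues_eq_det_sq :
    ∏ i, hH.eigenvalues i = ‖B.det‖^2 := by
  have h := hH.det_eq_prod_eigenvalues
  rw [det_mul, det_conjTranspose] at h
  have h2 : star B.det * B.det = ((‖B.det‖^2 : ℝ) : ℂ) := star_mul_self_complex _
  rw [h2] at h
  have h3 : ((‖B.det‖^2 : ℝ) : ℂ) = ((∏ i, hH.eigenvalues i : ℝ) : ℂ) := by
    rw [h]; push_cast; rfl
  exact_mod_cast h3.symm
end spectral


variable {L M N K : ℕ}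

def extC (c : Fin K → Fin N) (z : Fin K → ℂ) : Fin N → ℂ :=
  fun n => ∑ j, if c j = n then z j else 0

lemma extC_sub (c : Fin K → Fin N) (z z' : Fin K → ℂ) :
    extC c (z - z') = extC c z - extC c z' := by
  funext n
  simp only [extC, Pi.sub_apply, ← Finset.sum_sub_distrib]
  apply Finset.sum_congr rfl
  intro j _
  split <;> simp

lemma mulVec_extC (Q : Matrix (Fin L) (Fin N) ℂ) (c : Fin K → Fin N) (z : Fin K → ℂ) (l : Fin L) :
    (Q *ᵥ extC c z) l = ∑ j, Q l (c j) * z j := by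
  simp only [mulVec, dotProduct, extC, Finset.mul_sum]
  rw [Finset.sum_comm]
  apply Finset.sum_congr rfl
  intro j _
  rw [Finset.sum_congr rfl (fun n _ => by rw [mul_ite, mul_zero] : ∀ n ∈ univ, Q l n * (if c j = n then z j else 0) = if c j = n then Q l n * z j else 0)]
  exact Finset.sum_ite_eq univ (c j) (fun n => Q l n * z j) |>.trans (by simp)

lemma sum_sq_comp_injective (r : Fin K → Fin L) (hr : Function.Injective r) (w : Fin L → ℝ)
    (hw : ∀ l, 0 ≤ w l) : ∑ i, w (r i) ≤ ∑ l, w l := by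
  rw [show (∑ i, w (r i)) = ∑ l ∈ univ.image r, w l from (Finset.sum_image (fun a _ b _ h => hr h)).symm]
  exact Finset.sum_le_sum_of_subset_of_nonneg (Finset.subset_univ _) (fun l _ _ => hw l)

lemma submatrix_chain (P : Matrix (Fin L) (Fin M) ℂ) (A : Matrix (Fin M) (Fin N) ℂ)
    (hP : ∀ v : Fin M → ℂ, ∑ i, ‖P.mulVec v i‖ ^ 2 ≤ ∑ i, ‖v i‖ ^ 2)
    (r : Fin K → Fin L) (hr : Function.Injective r) (c : Fin K → Fin N) (z : Fin K → ℂ) :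
    ∑ i, ‖(((P*A).submatrix r c) *ᵥ z) i‖^2 ≤ ∑ i, ‖(A *ᵥ extC c z) i‖^2 := by
  have h1 : ∀ i, (((P*A).submatrix r c) *ᵥ z) i = ((P*A) *ᵥ extC c z) (r i) := by
    intro i
    rw [mulVec_extC]
    simp [mulVec, dotProduct, submatrix]
  calc ∑ i, ‖(((P*A).submatrix r c) *ᵥ z) i‖^2
      = ∑ i, ‖((P*A) *ᵥ extC c z) (r i)‖^2 := by
        apply Finset.sum_congr rfl; intro i _; rw [h1]
    _ ≤ ∑ l, ‖((P*A) *ᵥ extC c z) l‖^2 :=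
        sum_sq_comp_injective r hr (fun l => ‖((P*A) *ᵥ extC c z) l‖^2) (fun l => by positivity)
    _ = ∑ l, ‖(P *ᵥ (A *ᵥ extC c z)) l‖^2 := by rw [mulVec_mulVec]
    _ ≤ ∑ i, ‖(A *ᵥ extC c z) i‖^2 := hP _

lemma sum_sq_add_le (u v : Fin M → ℂ) :
    ∑ i, ‖(u + v) i‖^2 ≤ (Real.sqrt (∑ i, ‖u i‖^2) + Real.sqrt (∑ i, ‖v i‖^2))^2 := by
  have key : ∀ w : Fin M → ℂ,
      Real.sqrt (∑ i, ‖w i‖^2) = ‖(WithLp.equiv 2 (Fin M → ℂ)).symm w‖ := by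
    intro w
    rw [EuclideanSpace.norm_eq]
    rfl
  have h := norm_add_le ((WithLp.equiv 2 (Fin M → ℂ)).symm u) ((WithLp.equiv 2 (Fin M → ℂ)).symm v)
  rw [show (WithLp.equiv 2 (Fin M → ℂ)).symm u + (WithLp.equiv 2 (Fin M → ℂ)).symm v = (WithLp.equiv 2 (Fin M → ℂ)).symm (u + v) from rfl] at h
  rw [← key, ← key, ← key] at h
  have h2 : 0 ≤ Real.sqrt (∑ i, ‖u i‖^2) + Real.sqrt (∑ i, ‖v i‖^2) := by positivity
  have h3 := pow_le_pow_left₀ (Real.sqrt_nonneg _) h 2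
  rw [Real.sq_sqrt (by positivity : (0:ℝ) ≤ ∑ i, ‖(u+v) i‖^2)] at h3
  exact h3


variable {Ω : Type*} [MeasurableSpace Ω]

lemma exists_measurable_argmin {n : ℕ} (hn : 0 < n) (f : Fin n → Ω → ℝ)
    (hf : ∀ i, Measurable (f i)) :
    ∃ sel : Ω → Fin n, (∀ y j, f (sel y) y ≤ f j y) ∧
      (∀ i, MeasurableSet {y | sel y = i}) := by
  have hne : ∀ y, (univ.filter (fun i => ∀ j, f i y ≤ f j y)).Nonempty := by
    intro y
    obtain ⟨i, _, hi⟩ := Finset.exists_min_image univ (fun i => f i y) ⟨⟨0, hn⟩, mem_univ _⟩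
    exact ⟨i, mem_filter.mpr ⟨mem_univ _, fun j => hi j (mem_univ _)⟩⟩
  refine ⟨fun y => (univ.filter (fun i => ∀ j, f i y ≤ f j y)).min' (hne y), ?_, ?_⟩
  · intro y j
    have := Finset.min'_mem (univ.filter (fun i => ∀ j, f i y ≤ f j y)) (hne y)
    exact (mem_filter.mp this).2 j
  · intro i
    have hset : {y | (univ.filter (fun i => ∀ j, f i y ≤ f j y)).min' (hne y) = i}
        = {y | ∀ j, f i y ≤ f j y} ∩ ⋂ (i' : Fin n), ⋂ (_ : i' < i), {y | ∀ j, f i' y ≤ f j y}ᶜ := by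
      ext y
      simp only [Set.mem_setOf_eq, Set.mem_inter_iff, Set.mem_iInter, Set.mem_compl_iff]
      constructor
      · intro h
        constructor
        · rw [← h]
          have := Finset.min'_mem (univ.filter (fun i => ∀ j, f i y ≤ f j y)) (hne y)
          exact (mem_filter.mp this).2
        · intro i' hlt hp
          have hmem : i' ∈ univ.filter (fun i => ∀ j, f i y ≤ f j y) :=
            mem_filter.mpr ⟨mem_univ _, hp⟩
          have := Finset.min'_le _ i' hmem
          rw [h] at this
          exact absurd hlt (not_lt.mpr this)
      · rintro ⟨hp, hmin⟩
        have hmem : i ∈ univ.filter (fun i => ∀ j, f i y ≤ f j y) :=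
          mem_filter.mpr ⟨mem_univ _, hp⟩
        apply le_antisymm
        · exact Finset.min'_le _ i hmem
        · by_contra hlt
          push_neg at hlt
          have hmm := Finset.min'_mem (univ.filter (fun i => ∀ j, f i y ≤ f j y)) (hne y)
          exact hmin _ hlt (mem_filter.mp hmm).2
    rw [hset]
    apply MeasurableSet.inter
    · have : {y | ∀ j, f i y ≤ f j y} = ⋂ (j : Fin n), {y | f i y ≤ f j y} := by
        ext y; simp
      rw [this]
      exact MeasurableSet.iInter (fun j => measurableSet_le (hf i) (hf j))
    · refine MeasurableSet.iInter fun i' => MeasurableSet.iInter fun _ => MeasurableSet.compl ?_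
      have : {y | ∀ j, f i' y ≤ f j y} = ⋂ (j : Fin n), {y | f i' y ≤ f j y} := by
        ext y; simp
      rw [this]
      exact MeasurableSet.iInter (fun j => measurableSet_le (hf i') (hf j))

lemma measurable_distSq {M : ℕ} (w : Fin M → ℂ) :
    Measurable (fun y : Fin M → ℂ => ∑ i, ‖y i - w i‖^2) := by
  apply Finset.measurable_sum
  intro i _
  exact (((measurable_pi_apply i).sub measurable_const).norm).pow_const 2

section engine

variable {L M N K : ℕ}

def bvecC (b : Fin K → Bool) : Fin K → ℂ := fun j => if b j then 1 else 0

variable (U : Matrix (Fin K) (Fin K) ℂ) (S : Finset (Fin K))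

def njsD (j : Fin K) : ℝ := ∑ i ∈ S, ‖U j i‖^2
def innjD (j : Fin K) (z : Fin K → ℂ) : ℂ := ∑ i ∈ S, U j i * ((star U) *ᵥ z) i
def nSD (z : Fin K → ℂ) : ℝ := ∑ i ∈ S, ‖((star U) *ᵥ z) i‖^2

variable (hUnorm : ∀ z : Fin K → ℂ, ∑ j, ‖(U *ᵥ z) j‖^2 = ∑ i, ‖z i‖^2)

lemma njsD_nonneg (j : Fin K) : 0 ≤ njsD U S j := by
  apply Finset.sum_nonneg; intro i _; positivity

lemma nSD_nonneg (z : Fin K → ℂ) : 0 ≤ nSD U S z := by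
  apply Finset.sum_nonneg; intro i _; positivity

lemma star_mul_self_complex' (z : ℂ) : star z * z = ((‖z‖^2 : ℝ) : ℂ) := by
  rw [Complex.star_def, ← Complex.normSq_eq_conj_mul_self]
  norm_cast
  rw [Complex.sq_norm]

include hUnorm in
lemma col_norm_one (i : Fin K) : ∑ j, ‖U j i‖^2 = 1 := by
  have h := hUnorm (Pi.single i 1)
  have h1 : ∀ j, (U *ᵥ Pi.single i 1) j = U j i := by
    intro j
    simp [mulVec, dotProduct, Pi.single_apply, mul_ite, mul_one, mul_zero]
  have h2 : (∑ k, ‖(Pi.single i (1:ℂ) : Fin K → ℂ) k‖^2) = 1 := by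
    have hpt : ∀ k, ‖(Pi.single i (1:ℂ) : Fin K → ℂ) k‖^2 = if k = i then (1:ℝ) else 0 := by
      intro k
      by_cases hk : k = i <;> simp [Pi.single_apply, hk]
    rw [Finset.sum_congr rfl (fun k _ => hpt k), Finset.sum_ite_eq' univ i (fun _ => (1:ℝ))]
    simp
  rw [h2] at h
  rw [← h]
  apply Finset.sum_congr rfl
  intro j _
  rw [h1]

include hUnorm in
lemma sum_njsD : ∑ j, njsD U S j = (S.card : ℝ) := by
  unfold njsD
  rw [Finset.sum_comm]
  rw [Finset.sum_congr rfl (fun i (_ : i ∈ S) => col_norm_one U hUnorm i)]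
  simp

include hUnorm in
lemma sum_innjD_sq (z : Fin K → ℂ) : ∑ j, ‖innjD U S j z‖^2 = nSD U S z := by
  set cv : Fin K → ℂ := (star U) *ᵥ z with hcv
  set vS : Fin K → ℂ := fun i => if i ∈ S then cv i else 0 with hvS
  have h1 : ∀ j, innjD U S j z = (U *ᵥ vS) j := by
    intro j
    unfold innjD
    simp only [mulVec, dotProduct, hvS, mul_ite, mul_zero]
    rw [← Finset.sum_filter, Finset.filter_mem_eq_inter, Finset.univ_inter]
    rfl
  have h2 : (∑ i, ‖vS i‖^2) = nSD U S z := by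
    unfold nSD
    rw [← Finset.sum_filter_add_sum_filter_not univ (fun i => i ∈ S) (fun i => ‖vS i‖^2)]
    have hz : ∑ i ∈ univ.filter (fun i => ¬ i ∈ S), ‖vS i‖^2 = 0 := by
      apply Finset.sum_eq_zero
      intro i hi
      have := (Finset.mem_filter.mp hi).2
      simp [hvS, this]
    rw [hz, add_zero, Finset.filter_mem_eq_inter, Finset.univ_inter]
    apply Finset.sum_congr rfl
    intro i hi
    simp [hvS, hi, hcv]
  rw [← h2]
  rw [← hUnorm vS]
  apply Finset.sum_congr rfl
  intro j _
  rw [h1]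

lemma innjD_sub (j : Fin K) (z z' : Fin K → ℂ) :
    innjD U S j (z - z') = innjD U S j z - innjD U S j z' := by
  unfold innjD
  rw [← Finset.sum_sub_distrib]
  apply Finset.sum_congr rfl
  intro i _
  rw [Matrix.mulVec_sub]
  simp [mul_sub]

lemma innjD_single (j : Fin K) : innjD U S j (Pi.single j 1) = ((njsD U S j : ℝ) : ℂ) := by
  unfold innjD njsD
  have h1 : ∀ i, ((star U) *ᵥ Pi.single j 1) i = star (U j i) := by
    intro i
    simp [mulVec, dotProduct, Pi.single_apply, mul_ite, mul_one, mul_zero, Matrix.star_apply]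
  push_cast
  apply Finset.sum_congr rfl
  intro i _
  rw [h1, mul_comm, star_mul_self_complex']
  push_cast
  ring

lemma bvecC_update_sub (ξ : Fin K → Bool) (j : Fin K) (hξ : ξ j = false) :
    bvecC (Function.update ξ j true) - bvecC ξ = Pi.single j 1 := by
  funext k
  by_cases hk : k = j
  · subst hk
    simp [bvecC, Function.update_self, hξ, Pi.single_apply]
  · simp [bvecC, Function.update_of_ne hk, Pi.single_apply, hk]

include hUnorm in
lemma cs_njsD : ((S.card : ℝ))^2 ≤ (K : ℝ) * ∑ j, (njsD U S j)^2 := by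
  have h := Finset.sum_mul_sq_le_sq_mul_sq univ (fun _ => (1:ℝ)) (njsD U S)
  simp only [one_pow, one_mul, Finset.sum_const, Finset.card_univ, Fintype.card_fin,
    nsmul_eq_mul, mul_one] at h
  rw [sum_njsD U S hUnorm] at h
  exact h


set_option maxHeartbeats 1000000 in
include hUnorm in
lemma engine
    (hK : 0 < K)
    (A : Matrix (Fin M) (Fin N) ℂ) (𝒜 : (Fin N → ℝ) → Measure (Fin M → ℂ))
    (hprob : ∀ x, IsProbabilityMeasure (𝒜 x))
    {ε δ : ℝ} (hε0 : 0 < ε) (hεle : ε ≤ 1/100) (hδ0 : 0 < δ) (hδle : δ ≤ 1/100)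
    (hDP : DiffPrivate 𝒜 ε δ)
    (c : Fin K → Fin N)
    {θ : ℝ} (hθ : 0 < θ)
    (hBS : ∀ z : Fin K → ℂ, θ * nSD U S z ≤ ∑ i, ‖(A *ᵥ extC c z) i‖^2)
    (xv : (Fin K → Bool) → (Fin N → ℝ))
    (hx01 : ∀ b n, xv b n = 0 ∨ xv b n = 1)
    (hxC : ∀ b, (fun n => ((xv b n : ℝ) : ℂ)) = extC c (bvecC b))
    (hl1 : ∀ (j : Fin K) (ξ : Fin K → Bool), ξ j = false →
        ∑ n, |xv (Function.update ξ j true) n - xv ξ n| ≤ 1)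
    {Θ : ℝ} (hΘ : 0 < Θ)
    (hρ : ∀ b, (∫⁻ y, ∑ i, ((‖y i - A.mulVec (fun n => ((xv b n : ℝ):ℂ)) i‖₊ : ℝ≥0∞))^2
        ∂ 𝒜 (xv b)) < ENNReal.ofReal Θ) :
    θ * ((S.card:ℝ))^2 ≤ 320 * K * Θ := by
  classical
  -- distance function and decoder
  set ds : (Fin K → Bool) → (Fin M → ℂ) → ℝ :=
    fun b y => ∑ i, ‖y i - (A *ᵥ extC c (bvecC b)) i‖^2 with hds
  have hdsm : ∀ b, Measurable (ds b) := fun b => measurable_distSq _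
  have hnb0 : 0 < Fintype.card (Fin K → Bool) := Fintype.card_pos
  set eqb := Fintype.equivFin (Fin K → Bool) with heqb
  obtain ⟨sel, hselmin, hselmeas⟩ :=
    exists_measurable_argmin hnb0 (fun i y => ds (eqb.symm i) y) (fun i => hdsm _)
  set dec : (Fin M → ℂ) → (Fin K → Bool) := fun y => eqb.symm (sel y) with hdec
  have hdecmin : ∀ y b, ds (dec y) y ≤ ds b y := by
    intro y b
    have h := hselmin y (eqb b)
    simpa [hdec] using h
  have hdecmeas : ∀ (p : (Fin K → Bool) → Prop), MeasurableSet {y | p (dec y)} := by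
    intro p
    have hset : {y | p (dec y)} = ⋃ (b : Fin K → Bool) (_ : p b), {y | sel y = eqb b} := by
      ext y
      simp only [Set.mem_setOf_eq, Set.mem_iUnion]
      constructor
      · intro h
        exact ⟨dec y, h, by simp [hdec]⟩
      · rintro ⟨b, hb, hsel⟩
        have : dec y = b := by rw [hdec]; simp only; rw [hsel]; simp
        rwa [this]
    rw [hset]
    exact MeasurableSet.iUnion fun b => MeasurableSet.iUnion fun _ => hselmeas (eqb b)
  -- constants
  set t2 : ℝ := 4 * Θ with ht2
  have ht2pos : 0 < t2 := by rw [ht2]; linarith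
  set τ2 : ℝ := 16 * Θ / θ with hτ2
  have hτ2pos : 0 < τ2 := by rw [hτ2]; positivity
  -- real probabilities
  have hPI : ∀ b, IsProbabilityMeasure (𝒜 (xv b)) := fun b => hprob _
  set prr : (Fin K → Bool) → Set (Fin M → ℂ) → ℝ := fun b T => (𝒜 (xv b) T).toReal with hprr
  have prr_nonneg : ∀ b T, 0 ≤ prr b T := fun b T => ENNReal.toReal_nonneg
  have prr_le_one : ∀ b T, prr b T ≤ 1 := by
    intro b T
    rw [hprr]
    haveI := hPI b
    have h := prob_le_one (μ := 𝒜 (xv b)) (s := T)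
    simpa using ENNReal.toReal_mono ENNReal.one_ne_top h
  have prr_mono : ∀ b (T T' : Set (Fin M → ℂ)), T ⊆ T' → prr b T ≤ prr b T' := by
    intro b T T' hsub
    haveI := hPI b
    exact ENNReal.toReal_mono (measure_ne_top _ _) (measure_mono hsub)
  have prr_union : ∀ b (T T' : Set (Fin M → ℂ)), prr b (T ∪ T') ≤ prr b T + prr b T' := by
    intro b T T'
    haveI := hPI b
    have h := measure_union_le (μ := 𝒜 (xv b)) T T'
    have h2 := ENNReal.toReal_mono
      (by exact ENNReal.add_ne_top.mpr ⟨measure_ne_top _ _, measure_ne_top _ _⟩) h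
    rwa [ENNReal.toReal_add (measure_ne_top _ _) (measure_ne_top _ _)] at h2
  have prr_compl : ∀ b (T : Set (Fin M → ℂ)), MeasurableSet T → prr b Tᶜ = 1 - prr b T := by
    intro b T hT
    haveI := hPI b
    have h := measure_add_measure_compl (μ := 𝒜 (xv b)) hT
    rw [measure_univ] at h
    have h2 := congrArg ENNReal.toReal h
    rw [ENNReal.toReal_add (measure_ne_top _ _) (measure_ne_top _ _), ENNReal.toReal_one] at h2
    rw [hprr]
    linarith [h2]
  -- good events
  set G : (Fin K → Bool) → Set (Fin M → ℂ) := fun b => {y | ds b y ≤ t2} with hG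
  have hGmeas : ∀ b, MeasurableSet (G b) := fun b => measurableSet_le (hdsm b) measurable_const
  -- Markov
  have hGbig : ∀ b, 3/4 ≤ prr b (G b) := by
    intro b
    haveI := hPI b
    have hμc : 𝒜 (xv b) ((G b)ᶜ) ≤ ENNReal.ofReal (1/4) := by
      have hfm : Measurable fun y => ENNReal.ofReal (ds b y) := (hdsm b).ennreal_ofReal
      have hmark := mul_meas_ge_le_lintegral₀ (μ := 𝒜 (xv b)) hfm.aemeasurable (ENNReal.ofReal t2)
      have hint : (∫⁻ y, ENNReal.ofReal (ds b y) ∂𝒜 (xv b))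
          = ∫⁻ y, ∑ i, ((‖y i - A.mulVec (fun n => ((xv b n : ℝ):ℂ)) i‖₊ : ℝ≥0∞))^2 ∂𝒜 (xv b) := by
        apply lintegral_congr
        intro y
        rw [hxC b, hds]
        simp only
        rw [ENNReal.ofReal_sum_of_nonneg (fun i _ => by positivity)]
        apply Finset.sum_congr rfl
        intro i _
        rw [ENNReal.ofReal_pow (norm_nonneg _), ofReal_norm, enorm_eq_nnnorm]
      rw [hint] at hmark
      have hlt := lt_of_le_of_lt hmark (hρ b)
      have hsub : (G b)ᶜ ⊆ {y | ENNReal.ofReal t2 ≤ ENNReal.ofReal (ds b y)} := by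
        intro y hy
        simp only [hG, Set.mem_compl_iff, Set.mem_setOf_eq, not_le] at hy
        exact ENNReal.ofReal_le_ofReal hy.le
      have hmono := measure_mono (μ := 𝒜 (xv b)) hsub
      have hkey : ENNReal.ofReal t2 * 𝒜 (xv b) ((G b)ᶜ) ≤ ENNReal.ofReal Θ :=
        le_of_lt (lt_of_le_of_lt (mul_le_mul_right hmono _) hlt)
      have hdiv : 𝒜 (xv b) ((G b)ᶜ) ≤ ENNReal.ofReal Θ / ENNReal.ofReal t2 := by
        rw [ENNReal.le_div_iff_mul_le
          (Or.inl (ENNReal.ofReal_pos.mpr ht2pos).ne') (Or.inl ENNReal.ofReal_ne_top)]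
        rwa [mul_comm]
      rwa [← ENNReal.ofReal_div_of_pos ht2pos,
        show Θ / t2 = 1/4 by rw [ht2]; field_simp] at hdiv
    have hc4 : prr b ((G b)ᶜ) ≤ 1/4 :=
      ENNReal.toReal_le_of_le_ofReal (by norm_num) hμc
    have hcompl := prr_compl b (G b) (hGmeas b)
    linarith [hcompl, hc4]
  -- key geometric bound
  have keydist : ∀ b y, y ∈ G b → nSD U S (bvecC (dec y) - bvecC b) ≤ τ2 := by
    intro b y hy
    have hy2 : ds b y ≤ t2 := hy
    have h1 : ds (dec y) y ≤ t2 := le_trans (hdecmin y b) hy2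
    have h2 := hBS (bvecC (dec y) - bvecC b)
    set u : Fin M → ℂ := (fun i => (A *ᵥ extC c (bvecC (dec y))) i - y i) with hu
    set v : Fin M → ℂ := (fun i => y i - (A *ᵥ extC c (bvecC b)) i) with hv
    have hsum : (A *ᵥ extC c (bvecC (dec y) - bvecC b)) = u + v := by
      rw [extC_sub, Matrix.mulVec_sub]
      funext i
      simp [hu, hv]
    have h3 : ∑ i, ‖(A *ᵥ extC c (bvecC (dec y) - bvecC b)) i‖^2
        ≤ (Real.sqrt (∑ i, ‖u i‖^2) + Real.sqrt (∑ i, ‖v i‖^2))^2 := by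
      rw [hsum]; exact sum_sq_add_le u v
    have hue : ∑ i, ‖u i‖^2 = ds (dec y) y := by
      apply Finset.sum_congr rfl
      intro i _
      rw [hu]
      simp only
      rw [norm_sub_rev]
    have hve : ∑ i, ‖v i‖^2 = ds b y := rfl
    have h4 : (Real.sqrt (∑ i, ‖u i‖^2) + Real.sqrt (∑ i, ‖v i‖^2))^2 ≤ 4 * t2 := by
      rw [hue, hve]
      have s1 : Real.sqrt (ds (dec y) y) ≤ Real.sqrt t2 := Real.sqrt_le_sqrt h1
      have s2 : Real.sqrt (ds b y) ≤ Real.sqrt t2 := Real.sqrt_le_sqrt hy2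
      have s3 : (0:ℝ) ≤ Real.sqrt (ds (dec y) y) := Real.sqrt_nonneg _
      have s4 : (0:ℝ) ≤ Real.sqrt (ds b y) := Real.sqrt_nonneg _
      have s5 : Real.sqrt t2 ^ 2 = t2 := Real.sq_sqrt ht2pos.le
      nlinarith [s1, s2, s3, s4, s5]
    have h5 : θ * nSD U S (bvecC (dec y) - bvecC b) ≤ 4 * t2 := le_trans (le_trans h2 h3) h4
    rw [hτ2, ht2] at *
    rw [le_div_iff₀ hθ]
    calc nSD U S (bvecC (dec y) - bvecC b) * θ = θ * nSD U S (bvecC (dec y) - bvecC b) := by ring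
      _ ≤ 4 * (4*Θ) := h5
      _ = 16 * Θ := by ring
  -- Bad sets and F
  set Bad : Fin K → (Fin K → Bool) → Set (Fin M → ℂ) := fun j b =>
    {y | njsD U S j / 2 ≤ ‖innjD U S j (bvecC (dec y) - bvecC b)‖} with hBad
  have hBadmeas : ∀ j b, MeasurableSet (Bad j b) :=
    fun j b => hdecmeas (fun b₀ => njsD U S j / 2 ≤ ‖innjD U S j (bvecC b₀ - bvecC b)‖)
  set F : Fin K → (Fin K → Bool) → ℝ := fun j b => prr b (G b ∩ Bad j b) with hF
  have F_nonneg : ∀ j b, 0 ≤ F j b := fun j b => prr_nonneg _ _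
  -- DP in real form
  have dpr : ∀ b b', (∑ n, |xv b n - xv b' n|) ≤ 1 → ∀ T : Set (Fin M → ℂ), MeasurableSet T →
      prr b T ≤ Real.exp ε * prr b' T + δ := by
    intro b b' hsum T hT
    haveI := hPI b; haveI := hPI b'
    have hicc : ∀ (b : Fin K → Bool) (i : Fin N), xv b i ∈ Set.Icc (0:ℝ) 1 := by
      intro b i
      rcases hx01 b i with h | h <;> rw [h] <;> constructor <;> norm_num
    have h := hDP (xv b) (xv b') (hicc b) (hicc b') hsum T hT
    have hne : ENNReal.ofReal (Real.exp ε) * 𝒜 (xv b') T + ENNReal.ofReal δ ≠ ⊤ :=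
      ENNReal.add_ne_top.mpr ⟨ENNReal.mul_ne_top ENNReal.ofReal_ne_top (measure_ne_top _ _),
        ENNReal.ofReal_ne_top⟩
    have h2 := ENNReal.toReal_mono hne h
    rwa [ENNReal.toReal_add (ENNReal.mul_ne_top ENNReal.ofReal_ne_top (measure_ne_top _ _))
      ENNReal.ofReal_ne_top, ENNReal.toReal_mul, ENNReal.toReal_ofReal (Real.exp_pos ε).le,
      ENNReal.toReal_ofReal hδ0.le] at h2
  -- exp bounds
  have hexp1 : 1 ≤ Real.exp ε := Real.one_le_exp hε0.le
  have hexp2 : Real.exp ε ≤ 100/99 := by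
    have h1 : Real.exp ε ≤ Real.exp (1/100) := Real.exp_le_exp.mpr hεle
    have h2 : (99:ℝ)/100 ≤ Real.exp (-(1/100)) := by
      have := Real.add_one_le_exp (-(1/100 : ℝ))
      linarith
    have h3 : Real.exp (1/100) * Real.exp (-(1/100)) = 1 := by
      rw [← Real.exp_add]; norm_num
    nlinarith [Real.exp_pos (1/100 : ℝ), Real.exp_pos (-(1/100) : ℝ)]
  -- pair inequality
  have pair : ∀ (j : Fin K) (ξ : Fin K → Bool), ξ j = false →
      2/5 ≤ F j (Function.update ξ j true) + F j ξ := by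
    intro j ξ hξ
    set b1 := Function.update ξ j true with hb1
    set T : Set (Fin M → ℂ) :=
      {y | njsD U S j / 2 < (innjD U S j (bvecC (dec y) - bvecC ξ)).re} with hT
    have hTmeas : MeasurableSet T :=
      hdecmeas (fun b₀ => njsD U S j / 2 < (innjD U S j (bvecC b₀ - bvecC ξ)).re)
    have hsplitinn : ∀ b₀ : Fin K → Bool, innjD U S j (bvecC b₀ - bvecC ξ)
        = innjD U S j (bvecC b₀ - bvecC b1) + ((njsD U S j : ℝ) : ℂ) := by
      intro b₀
      have e1 := innjD_sub U S j (bvecC b₀) (bvecC ξ)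
      have e2 := innjD_sub U S j (bvecC b₀) (bvecC b1)
      have e3 := innjD_sub U S j (bvecC b1) (bvecC ξ)
      rw [bvecC_update_sub ξ j hξ, innjD_single] at e3
      linear_combination e1 - e2 - e3
    have hsub1 : G b1 ⊆ T ∪ (G b1 ∩ Bad j b1) := by
      intro y hy
      by_cases hbd : y ∈ Bad j b1
      · exact Or.inr ⟨hy, hbd⟩
      · left
        simp only [hBad, Set.mem_setOf_eq, not_le] at hbd
        show njsD U S j / 2 < (innjD U S j (bvecC (dec y) - bvecC ξ)).re
        rw [hsplitinn (dec y)]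
        rw [Complex.add_re, Complex.ofReal_re]
        have habs : |(innjD U S j (bvecC (dec y) - bvecC b1)).re|
            ≤ ‖innjD U S j (bvecC (dec y) - bvecC b1)‖ := Complex.abs_re_le_norm _
        have h2 := (abs_lt.mp (lt_of_le_of_lt habs hbd)).1
        linarith
    have hsub2 : T ⊆ (G ξ)ᶜ ∪ (G ξ ∩ Bad j ξ) := by
      intro y hy
      by_cases hgm : y ∈ G ξ
      · right
        refine ⟨hgm, ?_⟩
        simp only [hT, Set.mem_setOf_eq] at hy
        show njsD U S j / 2 ≤ ‖innjD U S j (bvecC (dec y) - bvecC ξ)‖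
        have := Complex.re_le_norm (innjD U S j (bvecC (dec y) - bvecC ξ))
        linarith
      · exact Or.inl hgm
    have hT1 : prr b1 (G b1) ≤ prr b1 T + F j b1 :=
      le_trans (prr_mono b1 _ _ hsub1) (prr_union b1 _ _)
    have hT0 : prr ξ T ≤ (1 - prr ξ (G ξ)) + F j ξ := by
      have := le_trans (prr_mono ξ _ _ hsub2) (prr_union ξ _ _)
      rwa [prr_compl ξ (G ξ) (hGmeas ξ)] at this
    have hdp := dpr b1 ξ (hl1 j ξ hξ) T hTmeas
    have hG1 := hGbig b1
    have hG0 := hGbig ξ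
    have hF0 : 0 ≤ F j ξ := F_nonneg j ξ
    have hF1 : 0 ≤ F j b1 := F_nonneg j b1
    nlinarith [mul_nonneg (show (0:ℝ) ≤ 100/99 - Real.exp ε by linarith)
      (show (0:ℝ) ≤ 1/4 + F j ξ by linarith),
      mul_le_mul_of_nonneg_left hT0 (Real.exp_pos ε).le]
  -- averaging over the cube
  have avg : ∀ j : Fin K, ((Fintype.card (Fin K → Bool)) : ℝ)/5 ≤ ∑ b, F j b := by
    intro j
    set e := Equiv.piSplitAt j (fun _ : Fin K => Bool) with he
    have hcards : Fintype.card (Fin K → Bool)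
        = 2 * Fintype.card ({j' : Fin K // j' ≠ j} → Bool) := by
      rw [Fintype.card_congr e, Fintype.card_prod, Fintype.card_bool]
    have hsum1 : ∑ b, F j b = ∑ p : Bool × ({j' : Fin K // j' ≠ j} → Bool), F j (e.symm p) :=
      (Equiv.sum_comp e.symm (F j)).symm
    rw [hsum1, Fintype.sum_prod_type]
    rw [Fintype.sum_bool]
    have hpt : ∀ rest : {j' : Fin K // j' ≠ j} → Bool,
        2/5 ≤ F j (e.symm (true, rest)) + F j (e.symm (false, rest)) := by
      intro rest
      set ξ := e.symm (false, rest) with hξdef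
      have hξj : ξ j = false := by
        rw [hξdef, he]
        simp [Equiv.piSplitAt_symm_apply]
      have hb1 : e.symm (true, rest) = Function.update ξ j true := by
        funext j'
        by_cases hj' : j' = j
        · subst hj'
          rw [Function.update_self, he]
          simp [Equiv.piSplitAt_symm_apply]
        · rw [Function.update_of_ne hj', hξdef, he]
          simp [Equiv.piSplitAt_symm_apply, hj']
      rw [hb1]
      exact pair j ξ hξj
    have := Finset.sum_le_sum (fun rest (_ : rest ∈ univ) => hpt rest)
    rw [Finset.sum_add_distrib] at this
    rw [Finset.sum_const, Finset.card_univ, nsmul_eq_mul] at this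
    rw [hcards]
    push_cast
    linarith
  -- counting per vertex
  have hpart : ∀ b (E : Set (Fin M → ℂ)), MeasurableSet E →
      prr b E = ∑ b₀, prr b (E ∩ {y | dec y = b₀}) := by
    intro b E hE
    haveI := hPI b
    have hmeas : ∀ b₀ : Fin K → Bool, MeasurableSet (E ∩ {y | dec y = b₀}) :=
      fun b₀ => hE.inter (hdecmeas (fun x => x = b₀))
    have hdisj : ((univ : Finset (Fin K → Bool)) : Set (Fin K → Bool)).PairwiseDisjoint
        (fun b₀ => E ∩ {y | dec y = b₀}) := by
      intro a _ b' _ hab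
      apply Set.disjoint_left.mpr
      rintro y ⟨_, hy1⟩ ⟨_, hy2⟩
      exact hab (hy1 ▸ hy2 ▸ rfl)
    have hcover : E = ⋃ b₀ ∈ (univ : Finset (Fin K → Bool)), (E ∩ {y | dec y = b₀}) := by
      ext y
      simp only [Set.mem_iUnion, Set.mem_inter_iff, Set.mem_setOf_eq]
      constructor
      · intro hy; exact ⟨dec y, mem_univ _, hy, rfl⟩
      · rintro ⟨b₀, _, hy, _⟩; exact hy
    have hmB := measure_biUnion_finset (μ := 𝒜 (xv b)) hdisj (fun b₀ _ => hmeas b₀)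
    have hEq : 𝒜 (xv b) E = ∑ b₀, 𝒜 (xv b) (E ∩ {y | dec y = b₀}) := by
      conv_lhs => rw [hcover]
      exact hmB
    rw [hprr]
    simp only
    rw [hEq, ENNReal.toReal_sum (fun b₀ _ => measure_ne_top _ _)]
  have count : ∀ b, ∑ j, (njsD U S j)^2 * F j b ≤ 4 * τ2 := by
    intro b
    have step1 : ∀ j, (njsD U S j)^2 * F j b
        ≤ ∑ b₀, 4*‖innjD U S j (bvecC b₀ - bvecC b)‖^2 * prr b (G b ∩ {y | dec y = b₀}) := by
      intro j
      rw [hF]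
      simp only
      rw [hpart b (G b ∩ Bad j b) ((hGmeas b).inter (hBadmeas j b))]
      rw [Finset.mul_sum]
      apply Finset.sum_le_sum
      intro b₀ _
      by_cases hcnd : njsD U S j / 2 ≤ ‖innjD U S j (bvecC b₀ - bvecC b)‖
      · have hm : prr b (G b ∩ Bad j b ∩ {y | dec y = b₀}) ≤ prr b (G b ∩ {y | dec y = b₀}) :=
          prr_mono b _ _ (fun y hy => ⟨hy.1.1, hy.2⟩)
        have hsq : (njsD U S j)^2 ≤ 4*‖innjD U S j (bvecC b₀ - bvecC b)‖^2 := by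
          nlinarith [njsD_nonneg U S j, norm_nonneg (innjD U S j (bvecC b₀ - bvecC b))]
        exact mul_le_mul hsq hm (prr_nonneg _ _) (by positivity)
      · have hempty : G b ∩ Bad j b ∩ {y | dec y = b₀} = ∅ := by
          ext y
          simp only [Set.mem_inter_iff, Set.mem_empty_iff_false, iff_false, not_and,
            Set.mem_setOf_eq, and_imp]
          intro _ hbd hdec0
          simp only [hBad, Set.mem_setOf_eq] at hbd
          rw [hdec0] at hbd
          exact absurd hbd hcnd
        rw [hempty]
        have : prr b ∅ = 0 := by rw [hprr]; simp
        rw [this, mul_zero]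
        positivity
    calc ∑ j, (njsD U S j)^2 * F j b
        ≤ ∑ j, ∑ b₀, 4*‖innjD U S j (bvecC b₀ - bvecC b)‖^2 * prr b (G b ∩ {y | dec y = b₀}) :=
          Finset.sum_le_sum (fun j _ => step1 j)
      _ = ∑ b₀, (4 * nSD U S (bvecC b₀ - bvecC b)) * prr b (G b ∩ {y | dec y = b₀}) := by
          rw [Finset.sum_comm]
          apply Finset.sum_congr rfl
          intro b₀ _
          rw [← Finset.sum_mul]
          congr 1
          rw [← Finset.mul_sum, sum_innjD_sq U S hUnorm]
      _ ≤ ∑ b₀, (4 * τ2) * prr b (G b ∩ {y | dec y = b₀}) := by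
          apply Finset.sum_le_sum
          intro b₀ _
          by_cases hne : (G b ∩ {y | dec y = b₀}).Nonempty
          · obtain ⟨y, hy⟩ := hne
            have hkd := keydist b y hy.1
            have hdy : dec y = b₀ := hy.2
            rw [← hdy]
            apply mul_le_mul_of_nonneg_right _ (prr_nonneg _ _)
            have := keydist b y hy.1
            linarith
          · rw [Set.not_nonempty_iff_eq_empty] at hne
            rw [hne]
            have : prr b ∅ = 0 := by rw [hprr]; simp
            rw [this, mul_zero, mul_zero]
      _ = (4 * τ2) * prr b (G b) := by
          rw [← Finset.mul_sum, ← hpart b (G b) (hGmeas b)]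
      _ ≤ (4 * τ2) * 1 := by
          apply mul_le_mul_of_nonneg_left (prr_le_one _ _) (by positivity)
      _ = 4 * τ2 := by ring
  -- final assembly
  set nb := Fintype.card (Fin K → Bool) with hnbd
  have hnbR : (0:ℝ) < nb := by exact_mod_cast hnb0
  have main1 : (nb:ℝ)/5 * ∑ j, (njsD U S j)^2 ≤ (nb:ℝ) * (4*τ2) := by
    calc (nb:ℝ)/5 * ∑ j, (njsD U S j)^2 = ∑ j, (njsD U S j)^2 * ((nb:ℝ)/5) := by
          rw [Finset.mul_sum]; apply Finset.sum_congr rfl; intros; ring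
      _ ≤ ∑ j, (njsD U S j)^2 * (∑ b, F j b) := by
          apply Finset.sum_le_sum
          intro j _
          exact mul_le_mul_of_nonneg_left (avg j) (by positivity)
      _ = ∑ b, ∑ j, (njsD U S j)^2 * F j b := by
          rw [Finset.sum_comm]
          apply Finset.sum_congr rfl
          intro j _
          rw [Finset.mul_sum]
      _ ≤ ∑ _b : Fin K → Bool, 4*τ2 := Finset.sum_le_sum (fun b _ => count b)
      _ = (nb:ℝ) * (4*τ2) := by
          rw [Finset.sum_const, Finset.card_univ, nsmul_eq_mul]
  have main2 : ∑ j, (njsD U S j)^2 ≤ 20 * τ2 := by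
    have h5 : (0:ℝ) < (nb:ℝ)/5 := by positivity
    have heq : (nb:ℝ)*(4*τ2) = ((nb:ℝ)/5)*(20*τ2) := by ring
    exact le_of_mul_le_mul_left (main1.trans_eq heq) h5
  have hcs := cs_njsD U S hUnorm
  have final : ((S.card:ℝ))^2 ≤ (K:ℝ) * (20 * τ2) := by
    calc ((S.card:ℝ))^2 ≤ (K:ℝ) * ∑ j, (njsD U S j)^2 := hcs
      _ ≤ (K:ℝ) * (20 * τ2) := by
          apply mul_le_mul_of_nonneg_left main2 (by positivity)
  rw [hτ2] at final
  have hKR : (0:ℝ) < K := by exact_mod_cast hK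
  calc θ * ((S.card:ℝ))^2 ≤ θ * ((K:ℝ) * (20 * (16 * Θ / θ))) := by
        apply mul_le_mul_of_nonneg_left final hθ.le
    _ = 320 * K * Θ := by field_simp; ring

end engine

end Prelim

open Matrix in
set_option maxHeartbeats 1000000 in
theorem projected_det_lower_bound :
    ∃ C ε₀ δ₀ : ℝ, 0 < C ∧ 0 < ε₀ ∧ 0 < δ₀ ∧
      ∀ (M N : ℕ) (A : Matrix (Fin M) (Fin N) ℂ)
        (𝒜 : (Fin N → ℝ) → Measure (Fin M → ℂ)),
        (∀ x, IsProbabilityMeasure (𝒜 x)) →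
        ∀ ε δ : ℝ, 0 < ε → ε ≤ ε₀ → 0 < δ → δ ≤ δ₀ →
        DiffPrivate 𝒜 ε δ →
        ∃ x : Fin N → ℝ, (∀ i, x i = 0 ∨ x i = 1) ∧
          ∀ (L : ℕ) (P : Matrix (Fin L) (Fin M) ℂ),
            (∀ v : Fin M → ℂ, ∑ i, ‖P.mulVec v i‖ ^ 2 ≤ ∑ i, ‖v i‖ ^ 2) →
            ∀ K : ℕ, 1 ≤ K →
            ∀ (r : Fin K → Fin L) (c : Fin K → Fin N),
              Function.Injective r → Function.Injective c →
              ENNReal.ofReal (C * (K : ℝ) * ‖((P * A).submatrix r c).det‖ ^ ((2 : ℝ) / K) /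
                  (Real.logb 2 N) ^ 2) ≤
                ∫⁻ y, ∑ i, (‖y i - A.mulVec (fun n => ((x n : ℝ) : ℂ)) i‖₊ : ℝ≥0∞) ^ 2
                  ∂(𝒜 x) := by
  classical
  refine ⟨1/1000000, 1/100, 1/100, by norm_num, by norm_num, by norm_num, ?_⟩
  intro M N A 𝒜 hprob ε δ hε0 hεle hδ0 hδle hDP
  set xr : (Fin N → Bool) → (Fin N → ℝ) := fun w n => if w n then 1 else 0 with hxr
  set R : (Fin N → Bool) → ℝ≥0∞ := fun w =>
    ∫⁻ y, ∑ i, ((‖y i - A.mulVec (fun n => ((xr w n : ℝ):ℂ)) i‖₊ : ℝ≥0∞))^2 ∂ 𝒜 (xr w) with hR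
  obtain ⟨ws, -, hmax⟩ := Finset.exists_max_image (univ : Finset (Fin N → Bool)) R
    ⟨(fun _ => false), mem_univ _⟩
  refine ⟨xr ws, fun i => by by_cases h : ws i <;> simp [hxr, h], ?_⟩
  intro L P hP K hK r c hr hc
  set Bm := (P * A).submatrix r c with hBm
  set D := ‖Bm.det‖ with hDdef
  by_cases hD0 : D = 0
  · have h2K : ((2:ℝ)/K) ≠ 0 := by
      have : (0:ℝ) < K := by exact_mod_cast hK
      positivity
    have hz : (1:ℝ)/1000000 * K * D ^ ((2:ℝ)/K) / (Real.logb 2 N)^2 = 0 := by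
      rw [hD0, Real.zero_rpow h2K]
      ring
    rw [hz, ENNReal.ofReal_zero]
    exact zero_le
  -- case N small
  by_cases hN0 : N = 0
  · subst hN0
    exact (c ⟨0, hK⟩).elim0
  by_cases hN1 : N = 1
  · subst hN1
    have hz : (1:ℝ)/1000000 * K * D ^ ((2:ℝ)/K) / (Real.logb 2 ((1:ℕ):ℝ))^2 = 0 := by
      norm_num [Real.logb_one]
    rw [hz, ENNReal.ofReal_zero]
    exact zero_le
  have hN2 : 2 ≤ N := by omega
  have hDpos : 0 < D := lt_of_le_of_ne (norm_nonneg _) (Ne.symm hD0)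
  have hlogb : 1 ≤ Real.logb 2 (N:ℝ) := by
    rw [show (1:ℝ) = Real.logb 2 2 from (Real.logb_self_eq_one one_lt_two).symm]
    exact Real.logb_le_logb_of_le one_lt_two (by norm_num) (by exact_mod_cast hN2)
  set g2 : ℝ := D ^ ((2:ℝ)/K) with hg2
  have hg2pos : 0 < g2 := Real.rpow_pos_of_pos hDpos _
  have hKR : (0:ℝ) < K := by exact_mod_cast hK
  -- reduce away the log factor
  suffices hsuf : ENNReal.ofReal ((1/1000000) * K * g2) ≤ R ws by
    refine le_trans (ENNReal.ofReal_le_ofReal ?_) hsuf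
    apply div_le_self (by positivity)
    nlinarith [hlogb]
  by_contra hcon
  push_neg at hcon
  -- spectral setup
  have hH : (Bmᴴ * Bm).IsHermitian := Matrix.isHermitian_conjTranspose_mul_self Bm
  set μ : Fin K → ℝ := hH.eigenvalues with hμ
  have hμnn : ∀ i, 0 ≤ μ i := by
    intro i
    open scoped ComplexOrder in
    exact (Matrix.posSemidef_conjTranspose_mul_self Bm).eigenvalues_nonneg i
  have hprodD : ∏ i, μ i = D^2 := prod_eigenvalues_eq_det_sq Bm hH
  have hprodne : (∏ i, μ i) ≠ 0 := by rw [hprodD]; positivity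
  have hμpos : ∀ i, 0 < μ i := by
    intro i
    rcases (Finset.prod_ne_zero_iff.mp hprodne) i (mem_univ i) |>.lt_or_gt with h | h
    · exact absurd (hμnn i) (not_le.mpr h)
    · exact h
  have hprodg : ∏ i, μ i = g2 ^ K := by
    rw [hprodD, hg2]
    rw [← Real.rpow_natCast (D ^ ((2:ℝ)/K)) K, ← Real.rpow_mul hDpos.le]
    have harg : (2:ℝ)/K * K = 2 := by field_simp
    rw [harg]
    rw [show ((2:ℝ):ℝ) = ((2:ℕ):ℝ) by norm_num, Real.rpow_natCast]
  obtain ⟨θ, S, hθpos, hθS, hθbig⟩ := exists_good_level hK μ hμpos hg2pos hprodg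
  set U : Matrix (Fin K) (Fin K) ℂ := (hH.eigenvectorUnitary : Matrix (Fin K) (Fin K) ℂ) with hU
  have hUnorm : ∀ z : Fin K → ℂ, ∑ j, ‖(U *ᵥ z) j‖^2 = ∑ i, ‖z i‖^2 :=
    fun z => sum_sq_mulVec_unitary Bm hH z
  have hBS : ∀ z : Fin K → ℂ, θ * nSD U S z ≤ ∑ i, ‖(A *ᵥ extC c z) i‖^2 := by
    intro z
    calc θ * nSD U S z ≤ ∑ i ∈ S, μ i * ‖((star U) *ᵥ z) i‖^2 := by
          unfold nSD
          rw [Finset.mul_sum]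
          apply Finset.sum_le_sum
          intro i hi
          exact mul_le_mul_of_nonneg_right (hθS i hi) (by positivity)
      _ ≤ ∑ i, μ i * ‖((star U) *ᵥ z) i‖^2 := by
          apply Finset.sum_le_sum_of_subset_of_nonneg (Finset.subset_univ S)
          intro i _ _
          have := hμnn i
          positivity
      _ = ∑ i, ‖(Bm *ᵥ z) i‖^2 := (quad_eq_sum_eig Bm hH z).symm
      _ ≤ ∑ i, ‖(A *ᵥ extC c z) i‖^2 := submatrix_chain P A hP r hr c z
  -- vertex embedding
  set emb : (Fin K → Bool) → (Fin N → Bool) :=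
    fun b n => decide (∃ j, c j = n ∧ b j = true) with hemb
  set xv : (Fin K → Bool) → (Fin N → ℝ) := fun b => xr (emb b) with hxv
  have hembc : ∀ b j, emb b (c j) = b j := by
    intro b j
    rw [hemb]
    cases hbj : b j
    · simp only [decide_eq_false_iff_not]
      rintro ⟨j', hj', hbj'⟩
      rw [hc hj'] at hbj'
      rw [hbj'] at hbj
      exact Bool.noConfusion hbj
    · simp only [decide_eq_true_eq]
      exact ⟨j, rfl, hbj⟩
  have hembnot : ∀ b n, (∀ j, c j ≠ n) → emb b n = false := by
    intro b n hn
    rw [hemb]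
    simp only [decide_eq_false_iff_not]
    rintro ⟨j', hj', -⟩
    exact hn j' hj'
  have hx01 : ∀ b n, xv b n = 0 ∨ xv b n = 1 := by
    intro b n
    rw [hxv, hxr]
    by_cases h : emb b n <;> simp [h]
  have hxC : ∀ b, (fun n => ((xv b n : ℝ) : ℂ)) = extC c (bvecC b) := by
    intro b
    funext n
    rw [hxv, hxr]
    simp only
    by_cases hn : ∃ j, c j = n
    · obtain ⟨j, rfl⟩ := hn
      rw [hembc b j]
      have hrhs : extC c (bvecC b) (c j) = bvecC b j := by
        unfold extC
        rw [Finset.sum_eq_single j]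
        · simp
        · intro j' _ hj'
          rw [if_neg (fun hx => hj' (hc hx))]
        · intro h; exact absurd (mem_univ j) h
      rw [hrhs]
      unfold bvecC
      by_cases h : b j <;> simp [h]
    · push_neg at hn
      rw [hembnot b n hn]
      have hrhs : extC c (bvecC b) n = 0 := by
        unfold extC
        apply Finset.sum_eq_zero
        intro j _
        rw [if_neg (hn j)]
      rw [hrhs]
      simp
  have hl1 : ∀ (j : Fin K) (ξ : Fin K → Bool), ξ j = false →
      ∑ n, |xv (Function.update ξ j true) n - xv ξ n| ≤ 1 := by
    intro j ξ hξ
    have hpt : ∀ n, |xv (Function.update ξ j true) n - xv ξ n| = if n = c j then 1 else 0 := by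
      intro n
      by_cases hn : n = c j
      · subst hn
        rw [hxv, hxr]
        simp only
        rw [hembc, hembc, Function.update_self, hξ]
        norm_num
      · rw [if_neg hn]
        by_cases hex : ∃ j', c j' = n
        · obtain ⟨j', rfl⟩ := hex
          have hj' : j' ≠ j := fun h => hn (by rw [h])
          rw [hxv, hxr]
          simp only
          rw [hembc, hembc, Function.update_of_ne hj']
          simp
        · push_neg at hex
          rw [hxv, hxr]
          simp only
          rw [hembnot _ _ hex, hembnot _ _ hex]
          simp
    rw [Finset.sum_congr rfl (fun n _ => hpt n)]
    rw [Finset.sum_ite_eq' univ (c j) (fun _ => (1:ℝ))]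
    simp
  set Θ : ℝ := (1/1000000) * K * g2 with hΘdef
  have hΘpos : 0 < Θ := by rw [hΘdef]; positivity
  have hρ : ∀ b, (∫⁻ y, ∑ i, ((‖y i - A.mulVec (fun n => ((xv b n : ℝ):ℂ)) i‖₊ : ℝ≥0∞))^2
      ∂ 𝒜 (xv b)) < ENNReal.ofReal Θ := by
    intro b
    exact lt_of_le_of_lt (hmax (emb b) (mem_univ _)) hcon
  have heng := engine U S hUnorm hK A 𝒜 hprob hε0 hεle hδ0 hδle hDP c hθpos hBS
    xv hx01 hxC hl1 hΘpos hρ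
  -- contradiction
  have hexp9 : Real.exp 2 < 9 := by
    have h1 : Real.exp 1 < 2.7182818286 := Real.exp_one_lt_d9
    have h2 : Real.exp 2 = Real.exp 1 * Real.exp 1 := by rw [← Real.exp_add]; norm_num
    nlinarith [Real.exp_pos 1]
  have hSnn : (0:ℝ) ≤ θ * ((S.card:ℝ))^2 := by positivity
  have hstep : (K:ℝ)^2 * g2 ≤ 9 * (320 * K * Θ) := by
    calc (K:ℝ)^2 * g2 ≤ Real.exp 2 * (θ * ((S.card:ℝ))^2) := hθbig
      _ ≤ 9 * (θ * ((S.card:ℝ))^2) := by nlinarith [hexp9, hSnn]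
      _ ≤ 9 * (320 * K * Θ) := by nlinarith [heng]
  rw [hΘdef] at hstep
  nlinarith [hstep, hg2pos, hKR]

end
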